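/- Fix n ≥ 1 and let w : (0,∞) → ℝ be twice continuously differentiable. Define u(t, r) = t^{−n/2} · exp(−r²/(4t)) · w(r/t) for t, r > 0. Then for all t, r > 0, with φ = r/t: ∂²u/∂r² + ((n−1)/r) ∂u/∂r − ∂u/∂t = t^{−n/2 − 2} · exp(−r²/(4t)) · ( w''(φ) + ((n−1)/φ) w'(φ) ). In particular, u solves the radial heat equation in n dimensions if and only if w satisfies the radial Laplace equation w'' + ((n−1)/φ) w' = 0. -/

import Mathlib

/-- `∂_t` for functions of `(t,r) ∈ ℝ²`. -/
noncomputable def dT (f : ℝ × ℝ → ℝ) (p : ℝ × ℝ) : ℝ := fderiv ℝ f p (1, 0)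

/-- `∂_r` for functions of `(t,r) ∈ ℝ²`. -/
noncomputable def dR (f : ℝ × ℝ → ℝ) (p : ℝ × ℝ) : ℝ := fderiv ℝ f p (0, 1)

/-- The ansatz `u(t,r) = t^{−n/2} e^{−r²/(4t)} w(r/t)`. -/
noncomputable def ansatzU (n : ℕ) (w : ℝ → ℝ) : ℝ × ℝ → ℝ :=
  fun p => p.1 ^ (-(n : ℝ) / 2) * Real.exp (-p.2 ^ 2 / (4 * p.1)) * w (p.2 / p.1)

lemma dR_slice (f : ℝ × ℝ → ℝ) (p : ℝ × ℝ) (h : DifferentiableAt ℝ f p) :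
    dR f p = deriv (fun y => f (p.1, y)) p.2 := by
  have h1 : HasDerivAt (fun y : ℝ => ((p.1, y) : ℝ × ℝ)) ((0 : ℝ), (1 : ℝ)) p.2 :=
    (hasDerivAt_const _ _).prodMk (hasDerivAt_id _)
  have h2 := h.hasFDerivAt.comp_hasDerivAt p.2 h1
  simp only [dR]
  exact (h2.deriv).symm

lemma dT_slice (f : ℝ × ℝ → ℝ) (p : ℝ × ℝ) (h : DifferentiableAt ℝ f p) :
    dT f p = deriv (fun s => f (s, p.2)) p.1 := by
  have h1 : HasDerivAt (fun s : ℝ => ((s, p.2) : ℝ × ℝ)) ((1 : ℝ), (0 : ℝ)) p.1 :=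
    (hasDerivAt_id _).prodMk (hasDerivAt_const _ _)
  have h2 := h.hasFDerivAt.comp_hasDerivAt p.1 h1
  simp only [dT]
  exact (h2.deriv).symm

lemma hasDerivAt_rslice (t c r : ℝ) (ht : 0 < t) (B : ℝ → ℝ) (B' : ℝ)
    (hB : HasDerivAt B B' r) :
    HasDerivAt (fun y => t ^ c * Real.exp (-y ^ 2 / (4 * t)) * B y)
      (t ^ c * Real.exp (-r ^ 2 / (4 * t)) * (-(r / (2 * t)) * B r + B')) r := by
  have h1 : HasDerivAt (fun y : ℝ => -y ^ 2 / (4 * t)) (-(2 * r) / (4 * t)) r := by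
    simpa using ((hasDerivAt_pow 2 r).neg.div_const (4 * t))
  have hE := (h1.exp.const_mul (t ^ c)).fun_mul hB
  refine hE.congr_deriv ?_
  have h2 : (4 : ℝ) * t ≠ 0 := by positivity
  field_simp
  ring

lemma hasDerivAt_tslice (t c r : ℝ) (ht : 0 < t) (g : ℝ → ℝ) (g' : ℝ)
    (hg : HasDerivAt g g' (r / t)) :
    HasDerivAt (fun s => s ^ c * Real.exp (-r ^ 2 / (4 * s)) * g (r / s))
      (t ^ c * Real.exp (-r ^ 2 / (4 * t)) *
        ((c / t) * g (r / t) + (r ^ 2 / (4 * t ^ 2)) * g (r / t) - (r / t ^ 2) * g')) t := by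
  have h1 : HasDerivAt (fun s : ℝ => s ^ c) (c * t ^ (c - 1)) t :=
    Real.hasDerivAt_rpow_const (Or.inl ht.ne')
  have h2 : HasDerivAt (fun s : ℝ => -r ^ 2 / (4 * s))
      ((0 * (4 * t) - (-r ^ 2) * (4 * 1)) / (4 * t) ^ 2) t :=
    (hasDerivAt_const t (-r ^ 2)).div ((hasDerivAt_id t).const_mul 4) (by positivity)
  have h3 : HasDerivAt (fun s : ℝ => r / s) ((0 * t - r * 1) / t ^ 2) t :=
    (hasDerivAt_const t r).div (hasDerivAt_id t) ht.ne'
  have h4 := hg.comp t h3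
  have h5 := (h1.fun_mul h2.exp).fun_mul h4
  refine h5.congr_deriv ?_
  rw [Real.rpow_sub_one ht.ne']
  simp only [Function.comp_apply]
  have h6 : (4 : ℝ) * t ≠ 0 := by positivity
  field_simp
  ring

lemma diffAux (c : ℝ) (G : ℝ × ℝ → ℝ) (p : ℝ × ℝ) (hp : p.1 ≠ 0)
    (hG : DifferentiableAt ℝ G p) :
    DifferentiableAt ℝ (fun q : ℝ × ℝ => q.1 ^ c * Real.exp (-q.2 ^ 2 / (4 * q.1)) * G q) p := by
  have df : DifferentiableAt ℝ (fun q : ℝ × ℝ => q.1) p := differentiableAt_fst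
  have ds : DifferentiableAt ℝ (fun q : ℝ × ℝ => q.2) p := differentiableAt_snd
  have d1 : DifferentiableAt ℝ (fun q : ℝ × ℝ => q.1 ^ c) p :=
    df.rpow_const (Or.inl hp)
  have dq : DifferentiableAt ℝ (fun q : ℝ × ℝ => -q.2 ^ 2 / (4 * q.1)) p := by
    have := (ds.fun_pow 2).fun_neg.fun_mul ((df.const_mul 4).fun_inv (mul_ne_zero four_ne_zero hp))
    simpa [div_eq_mul_inv] using this
  have d2 : DifferentiableAt ℝ (fun q : ℝ × ℝ => Real.exp (-q.2 ^ 2 / (4 * q.1))) p := dq.exp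
  exact (d1.mul d2).mul hG

lemma diffQuot (p : ℝ × ℝ) (hp : p.1 ≠ 0) :
    DifferentiableAt ℝ (fun q : ℝ × ℝ => q.2 / q.1) p := by
  have df : DifferentiableAt ℝ (fun q : ℝ × ℝ => q.1) p := differentiableAt_fst
  have ds : DifferentiableAt ℝ (fun q : ℝ × ℝ => q.2) p := differentiableAt_snd
  have := ds.fun_mul (df.fun_inv hp)
  simpa [div_eq_mul_inv] using this

/-- Reduction of the radial `n`-dimensional heat equation by
`u = t^{−n/2} e^{−r²/(4t)} w(r/t)`: the heat operator evaluates to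
`t^{−n/2−2} e^{−r²/(4t)} (w'' + ((n−1)/φ) w')` at `φ = r/t`, so `u` solves the
radial heat equation iff `w` solves the radial Laplace equation. -/
theorem reduction_to_radial_laplace (n : ℕ) (hn : 1 ≤ n) (w : ℝ → ℝ)
    (hw : ContDiffOn ℝ 2 w (Set.Ioi 0)) :
    (∀ t r : ℝ, 0 < t → 0 < r →
      dR (dR (ansatzU n w)) (t, r) + (((n : ℝ) - 1) / r) * dR (ansatzU n w) (t, r)
          - dT (ansatzU n w) (t, r)
        = t ^ (-(n : ℝ) / 2 - 2) * Real.exp (-r ^ 2 / (4 * t)) *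
            (deriv (deriv w) (r / t) + (((n : ℝ) - 1) / (r / t)) * deriv w (r / t))) ∧
    ((∀ t r : ℝ, 0 < t → 0 < r →
        dR (dR (ansatzU n w)) (t, r) + (((n : ℝ) - 1) / r) * dR (ansatzU n w) (t, r)
          - dT (ansatzU n w) (t, r) = 0) ↔
      (∀ φ : ℝ, 0 < φ →
        deriv (deriv w) φ + (((n : ℝ) - 1) / φ) * deriv w φ = 0)) := by
  set c : ℝ := -(n : ℝ) / 2 with hc
  -- derivative facts for w
  have hwd : ∀ x : ℝ, 0 < x → HasDerivAt w (deriv w x) x := by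
    intro x hx
    exact ((hw.differentiableOn (by norm_num)).differentiableAt
      (isOpen_Ioi.mem_nhds hx)).hasDerivAt
  have hwd2 : ∀ x : ℝ, 0 < x → HasDerivAt (deriv w) (deriv (deriv w) x) x := by
    intro x hx
    have hw' : ContDiffOn ℝ 1 (deriv w) (Set.Ioi 0) :=
      hw.deriv_of_isOpen isOpen_Ioi (by norm_num)
    exact ((hw'.differentiableOn (by norm_num)).differentiableAt
      (isOpen_Ioi.mem_nhds hx)).hasDerivAt
  -- the first r-derivative, as an explicit function
  set V : ℝ × ℝ → ℝ := fun p =>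
    p.1 ^ c * Real.exp (-p.2 ^ 2 / (4 * p.1)) *
      (-(p.2 / (2 * p.1)) * w (p.2 / p.1) + (1 / p.1) * deriv w (p.2 / p.1)) with hV
  have hUdiff : ∀ p : ℝ × ℝ, 0 < p.1 → 0 < p.2 → DifferentiableAt ℝ (ansatzU n w) p := by
    intro p h1 h2
    have hφ : 0 < p.2 / p.1 := div_pos h2 h1
    exact diffAux c (fun q => w (q.2 / q.1)) p h1.ne'
      (((hw.differentiableOn (by norm_num)).differentiableAt
        (isOpen_Ioi.mem_nhds hφ)).comp p (diffQuot p h1.ne'))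
  -- w composed with y ↦ y/t, as functions of the second variable
  have hwcomp : ∀ t r : ℝ, 0 < t → 0 < r →
      HasDerivAt (fun y => w (y / t)) (deriv w (r / t) * (1 / t)) r := by
    intro t r ht hr
    exact (hwd _ (div_pos hr ht)).comp r ((hasDerivAt_id r).div_const t)
  have hwcomp2 : ∀ t r : ℝ, 0 < t → 0 < r →
      HasDerivAt (fun y => deriv w (y / t)) (deriv (deriv w) (r / t) * (1 / t)) r := by
    intro t r ht hr
    exact (hwd2 _ (div_pos hr ht)).comp r ((hasDerivAt_id r).div_const t)
  have hdRU : ∀ p : ℝ × ℝ, 0 < p.1 → 0 < p.2 → dR (ansatzU n w) p = V p := by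
    intro p h1 h2
    rw [dR_slice _ _ (hUdiff p h1 h2)]
    have h := hasDerivAt_rslice p.1 c p.2 h1 (fun y => w (y / p.1))
      (deriv w (p.2 / p.1) * (1 / p.1)) (hwcomp p.1 p.2 h1 h2)
    have heq : (fun y => ansatzU n w (p.1, y)) =
        fun y => p.1 ^ c * Real.exp (-y ^ 2 / (4 * p.1)) * w (y / p.1) := rfl
    rw [heq, h.deriv, hV]
    ring
  -- main pointwise identity
  have main : ∀ t r : ℝ, 0 < t → 0 < r →
      dR (dR (ansatzU n w)) (t, r) + (((n : ℝ) - 1) / r) * dR (ansatzU n w) (t, r)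
        - dT (ansatzU n w) (t, r)
      = t ^ (c - 2) * Real.exp (-r ^ 2 / (4 * t)) *
          (deriv (deriv w) (r / t) + (((n : ℝ) - 1) / (r / t)) * deriv w (r / t)) := by
    intro t r ht hr
    have hφ : 0 < r / t := div_pos hr ht
    -- dR (dR U) = dR V at (t,r)
    have hev : dR (ansatzU n w) =ᶠ[nhds (t, r)] V := by
      have hopen : IsOpen {p : ℝ × ℝ | 0 < p.1 ∧ 0 < p.2} :=
        (isOpen_lt continuous_const continuous_fst).inter
          (isOpen_lt continuous_const continuous_snd)
      filter_upwards [hopen.mem_nhds ⟨ht, hr⟩] with p hp using hdRU p hp.1 hp.2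
    have hVdiff : DifferentiableAt ℝ V (t, r) := by
      apply diffAux
      · exact ht.ne'
      · have e1 : DifferentiableAt ℝ (fun q : ℝ × ℝ => w (q.2 / q.1)) (t, r) :=
          ((hw.differentiableOn (by norm_num)).differentiableAt
            (isOpen_Ioi.mem_nhds hφ)).comp (t, r) (diffQuot (t, r) ht.ne')
        have e2 : DifferentiableAt ℝ (fun q : ℝ × ℝ => deriv w (q.2 / q.1)) (t, r) := by
          have hw' : ContDiffOn ℝ 1 (deriv w) (Set.Ioi 0) :=
            hw.deriv_of_isOpen isOpen_Ioi (by norm_num)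
          exact ((hw'.differentiableOn (by norm_num)).differentiableAt
            (isOpen_Ioi.mem_nhds hφ)).comp (t, r) (diffQuot (t, r) ht.ne')
        have df : DifferentiableAt ℝ (fun q : ℝ × ℝ => q.1) (t, r) := differentiableAt_fst
        have ds : DifferentiableAt ℝ (fun q : ℝ × ℝ => q.2) (t, r) := differentiableAt_snd
        have e3 : DifferentiableAt ℝ (fun q : ℝ × ℝ => -(q.2 / (2 * q.1))) (t, r) := by
          have h1 : (fun q : ℝ × ℝ => (2:ℝ) * q.1) (t, r) ≠ 0 := mul_ne_zero two_ne_zero ht.ne'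
          have := (ds.fun_mul ((df.const_mul 2).fun_inv h1)).fun_neg
          simpa [div_eq_mul_inv] using this
        have e4 : DifferentiableAt ℝ (fun q : ℝ × ℝ => (1 : ℝ) / q.1) (t, r) := by
          have h1 : (fun q : ℝ × ℝ => q.1) (t, r) ≠ 0 := ht.ne'
          simpa [one_div] using df.fun_inv h1
        exact (e3.mul e1).add (e4.mul e2)
    have hdRdR : dR (dR (ansatzU n w)) (t, r) = dR V (t, r) := by
      simp only [dR]
      rw [hev.fderiv_eq]
    -- compute dR V (t,r)
    have hB1 : HasDerivAt (fun y : ℝ => -(y / (2 * t)) * w (y / t))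
        (-(1 / (2 * t)) * w (r / t) + -(r / (2 * t)) * (deriv w (r / t) * (1 / t))) r :=
      (((hasDerivAt_id r).div_const (2 * t)).neg).mul (hwcomp t r ht hr)
    have hB2 : HasDerivAt (fun y : ℝ => (1 / t) * deriv w (y / t))
        ((1 / t) * (deriv (deriv w) (r / t) * (1 / t))) r :=
      (hwcomp2 t r ht hr).const_mul (1 / t)
    have hBV := hasDerivAt_rslice t c r ht _ _ (hB1.add hB2)
    have hdRV : dR V (t, r) =
        t ^ c * Real.exp (-r ^ 2 / (4 * t)) *
          (-(r / (2 * t)) * (-(r / (2 * t)) * w (r / t) + (1 / t) * deriv w (r / t)) +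
            (-(1 / (2 * t)) * w (r / t) + -(r / (2 * t)) * (deriv w (r / t) * (1 / t)) +
              (1 / t) * (deriv (deriv w) (r / t) * (1 / t)))) := by
      rw [dR_slice _ _ hVdiff]
      exact hBV.deriv
    -- compute dT U (t,r)
    have hdTU : dT (ansatzU n w) (t, r) =
        t ^ c * Real.exp (-r ^ 2 / (4 * t)) *
          ((c / t) * w (r / t) + (r ^ 2 / (4 * t ^ 2)) * w (r / t) -
            (r / t ^ 2) * deriv w (r / t)) := by
      rw [dT_slice _ _ (hUdiff (t, r) ht hr)]
      exact (hasDerivAt_tslice t c r ht w (deriv w (r / t)) (hwd _ hφ)).deriv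
    rw [hdRdR, hdRV, hdTU, hdRU (t, r) ht hr, hV]
    have e2 : t ^ (c - 2) = t ^ c / t ^ 2 := by
      rw [show (2 : ℝ) = ((2 : ℕ) : ℝ) by norm_num, Real.rpow_sub ht, Real.rpow_natCast]
    rw [e2, hc]
    have hrt : r / t ≠ 0 := hφ.ne'
    field_simp
    ring
  refine ⟨fun t r ht hr => main t r ht hr, ?_, ?_⟩
  · intro H φ hφ
    have h1 := main 1 φ one_pos hφ
    rw [H 1 φ one_pos hφ] at h1
    have h2 := h1.symm
    rw [Real.one_rpow, div_one, one_mul] at h2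
    have h3 := Real.exp_ne_zero (-φ ^ 2 / (4 * 1))
    rcases mul_eq_zero.mp h2 with h | h
    · exact absurd h h3
    · exact h
  · intro H t r ht hr
    rw [main t r ht hr, H (r / t) (div_pos hr ht), mul_zero]
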